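/- For any vectors a, b in R^n and any p ≥ 2, the inner product ⟨|b|^{p-2} b − |a|^{p-2} a, b − a⟩ is at least 2^{2−p} |b − a|^p. -/
import Mathlib

open Real MeasureTheory
open scoped RealInnerProductSpace

private lemma aux_rpow_split {z r : ℝ} (hz : 0 ≤ z) (hr : 1 ≤ r) :
    z ^ r = z ^ (r - 1) * z := by
  have : z ^ r = z ^ ((r - 1) + 1) := by norm_num
  rw [this, Real.rpow_add' hz (by norm_num; linarith), Real.rpow_one]

private lemma aux_superadd {x y r : ℝ} (hx : 0 ≤ x) (hy : 0 ≤ y) (hr : 1 ≤ r) :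
    x ^ r + y ^ r ≤ (x + y) ^ r := by
  have hr0 : (0:ℝ) ≤ r - 1 := by linarith
  have h1 : x ^ (r-1) ≤ (x+y) ^ (r-1) := Real.rpow_le_rpow hx (by linarith) hr0
  have h2 : y ^ (r-1) ≤ (x+y) ^ (r-1) := Real.rpow_le_rpow hy (by linarith) hr0
  rw [aux_rpow_split hx hr, aux_rpow_split hy hr, aux_rpow_split (by linarith) hr]
  nlinarith [Real.rpow_nonneg hx (r-1), Real.rpow_nonneg hy (r-1)]

private lemma aux_two_pow {A B r : ℝ} (hA : 0 ≤ A) (hB : 0 ≤ B) (hr : 1 ≤ r) :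
    (2:ℝ) ^ (1 - r) * (A + B) ^ r ≤ A ^ r + B ^ r := by
  have hmid := (convexOn_rpow hr).2 (Set.mem_Ici.2 hA) (Set.mem_Ici.2 hB)
    (by norm_num : (0:ℝ) ≤ 1/2) (by norm_num : (0:ℝ) ≤ 1/2) (by norm_num)
  simp only [smul_eq_mul] at hmid
  have hAB : (1/2 : ℝ) * A + (1/2) * B = (A+B)/2 := by ring
  rw [hAB] at hmid
  have h2r : (0:ℝ) < (2:ℝ) ^ r := Real.rpow_pos_of_pos two_pos r
  have h2eq : (2:ℝ) ^ (1-r) * (2:ℝ) ^ r = 2 := by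
    rw [← Real.rpow_add two_pos]; norm_num
  have hsplit : ((A+B)/2) ^ r = (A+B) ^ r / (2:ℝ) ^ r :=
    Real.div_rpow (by linarith) (by norm_num) r
  rw [hsplit] at hmid
  have h2f : (2:ℝ) ^ (1-r) = 2 / (2:ℝ) ^ r := by
    field_simp
    linarith [h2eq]
  rw [h2f]
  calc 2 / (2:ℝ)^r * (A+B)^r = 2 * ((A+B)^r / (2:ℝ)^r) := by ring
    _ ≤ 2 * ((A^r + B^r)/2) := by linarith [hmid]
    _ = A^r + B^r := by ring

private lemma aux_sq_rpow {d p : ℝ} (hd : 0 ≤ d) : (d * d) ^ (p/2) = d ^ p := by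
  have h : d * d = d ^ (2:ℝ) := by rw [Real.rpow_two]; ring
  rw [h, ← Real.rpow_mul hd, show 2 * (p/2) = p by ring]

set_option maxHeartbeats 1000000 in
private lemma aux_key {p A B D : ℝ} (hp : 2 ≤ p) (hA : 0 ≤ A) (hAB : A ≤ B)
    (hD1 : B - A ≤ D) (hD2 : D ≤ A + B) :
    (2:ℝ) ^ (2-p) * D ^ p ≤
      (A ^ (p-2) + B ^ (p-2))/2 * (D*D) + (B ^ (p-2) - A ^ (p-2)) * (B*B - A*A)/2 := by
  have hB : 0 ≤ B := le_trans hA hAB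
  have hD0 : 0 ≤ D := le_trans (by linarith) hD1
  have hp1 : (1:ℝ) ≤ p - 1 := by linarith
  have hp2 : (0:ℝ) ≤ p - 2 := by linarith
  set c : ℝ := (A ^ (p-2) + B ^ (p-2))/2 with hc_def
  set e : ℝ := (B ^ (p-2) - A ^ (p-2)) * (B*B - A*A)/2 with he_def
  have hABq : A ^ (p-2) ≤ B ^ (p-2) := Real.rpow_le_rpow hA hAB hp2
  have he : 0 ≤ e := by
    have h1 : A*A ≤ B*B := mul_self_le_mul_self hA hAB
    rw [he_def]
    have := sub_nonneg.2 hABq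
    nlinarith
  have hc : 0 ≤ c := by positivity
  -- splitting identities
  have hAsplit : A ^ (p-1) = A ^ (p-2) * A := by
    have := aux_rpow_split hA hp1; rw [show p - 1 - 1 = p - 2 by ring] at this; exact this
  have hBsplit : B ^ (p-1) = B ^ (p-2) * B := by
    have := aux_rpow_split hB hp1; rw [show p - 1 - 1 = p - 2 by ring] at this; exact this
  have h21 : (2:ℝ) ^ (2-p) ≤ 1 :=
    Real.rpow_le_one_of_one_le_of_nonpos (by norm_num) (by linarith)
  have h2pos : (0:ℝ) ≤ (2:ℝ) ^ (2-p) := Real.rpow_nonneg (by norm_num) _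
  -- endpoint 1 : at x1 = (B-A)^2
  have hend1 : (2:ℝ) ^ (2-p) * ((B-A)*(B-A)) ^ (p/2) ≤ c * ((B-A)*(B-A)) + e := by
    rw [aux_sq_rpow (by linarith)]
    have hdsplit : (B-A) ^ p = (B-A) ^ (p-1) * (B-A) :=
      aux_rpow_split (by linarith) (by linarith)
    have hsup : (B-A) ^ (p-1) + A ^ (p-1) ≤ B ^ (p-1) := by
      have := aux_superadd (x := B - A) (y := A) (by linarith) hA hp1
      rwa [show B - A + A = B by ring] at this
    have hid : c * ((B-A)*(B-A)) + e = (B-A) * (B ^ (p-1) - A ^ (p-1)) := by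
      rw [hc_def, he_def, hAsplit, hBsplit]; ring
    rw [hid]
    calc (2:ℝ) ^ (2-p) * (B-A) ^ p ≤ 1 * (B-A) ^ p := by
          apply mul_le_mul_of_nonneg_right h21 (Real.rpow_nonneg (by linarith) _)
      _ = (B-A) ^ (p-1) * (B-A) := by rw [one_mul, hdsplit]
      _ ≤ (B ^ (p-1) - A ^ (p-1)) * (B-A) := by
          apply mul_le_mul_of_nonneg_right (by linarith) (by linarith)
      _ = (B-A) * (B ^ (p-1) - A ^ (p-1)) := by ring
  -- endpoint 2 : at x2 = (A+B)^2
  have hend2 : (2:ℝ) ^ (2-p) * ((A+B)*(A+B)) ^ (p/2) ≤ c * ((A+B)*(A+B)) + e := by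
    rw [aux_sq_rpow (by linarith)]
    have hdsplit : (A+B) ^ p = (A+B) ^ (p-1) * (A+B) :=
      aux_rpow_split (by linarith) (by linarith)
    have htwo : (2:ℝ) ^ (2-p) * (A+B) ^ (p-1) ≤ A ^ (p-1) + B ^ (p-1) := by
      have := aux_two_pow hA hB hp1
      rwa [show 1 - (p-1) = 2 - p by ring] at this
    have hid : c * ((A+B)*(A+B)) + e = (A+B) * (A ^ (p-1) + B ^ (p-1)) := by
      rw [hc_def, he_def, hAsplit, hBsplit]; ring
    rw [hid, hdsplit]
    calc (2:ℝ) ^ (2-p) * ((A+B) ^ (p-1) * (A+B))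
        = ((2:ℝ) ^ (2-p) * (A+B) ^ (p-1)) * (A+B) := by ring
      _ ≤ (A ^ (p-1) + B ^ (p-1)) * (A+B) := by
          apply mul_le_mul_of_nonneg_right htwo (by linarith)
      _ = (A+B) * (A ^ (p-1) + B ^ (p-1)) := by ring
  -- convexity combination
  have hx1 : (B-A)*(B-A) ≤ D*D := mul_self_le_mul_self (by linarith) hD1
  have hx2 : D*D ≤ (A+B)*(A+B) := mul_self_le_mul_self hD0 hD2
  have hmem : D*D ∈ segment ℝ ((B-A)*(B-A)) ((A+B)*(A+B)) := by
    rw [segment_eq_Icc (le_trans hx1 hx2)]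
    exact ⟨hx1, hx2⟩
  obtain ⟨ta, tb, hta, htb, hsum, hx⟩ := hmem
  simp only [smul_eq_mul] at hx
  have hcx : (ta * ((B-A)*(B-A)) + tb * ((A+B)*(A+B))) ^ (p/2)
      ≤ ta * ((B-A)*(B-A)) ^ (p/2) + tb * ((A+B)*(A+B)) ^ (p/2) := by
    have := (convexOn_rpow (by linarith : (1:ℝ) ≤ p/2)).2
      (Set.mem_Ici.2 (by nlinarith : (0:ℝ) ≤ (B-A)*(B-A)))
      (Set.mem_Ici.2 (by nlinarith : (0:ℝ) ≤ (A+B)*(A+B))) hta htb hsum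
    simpa using this
  rw [← aux_sq_rpow hD0, ← hx]
  calc (2:ℝ) ^ (2-p) * (ta * ((B-A)*(B-A)) + tb * ((A+B)*(A+B))) ^ (p/2)
      ≤ (2:ℝ) ^ (2-p) * (ta * ((B-A)*(B-A)) ^ (p/2) + tb * ((A+B)*(A+B)) ^ (p/2)) :=
        mul_le_mul_of_nonneg_left hcx h2pos
    _ = ta * ((2:ℝ)^(2-p) * ((B-A)*(B-A)) ^ (p/2))
        + tb * ((2:ℝ)^(2-p) * ((A+B)*(A+B)) ^ (p/2)) := by ring
    _ ≤ ta * (c * ((B-A)*(B-A)) + e) + tb * (c * ((A+B)*(A+B)) + e) := by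
        have k1 := mul_le_mul_of_nonneg_left hend1 hta
        have k2 := mul_le_mul_of_nonneg_left hend2 htb
        linarith
    _ = c * (ta * ((B-A)*(B-A)) + tb * ((A+B)*(A+B))) + (ta + tb) * e := by ring
    _ = c * (ta * ((B-A)*(B-A)) + tb * ((A+B)*(A+B))) + e := by rw [hsum, one_mul]

theorem stmt0 (n : ℕ) (p : ℝ) (hp : 2 ≤ p)
    (a b : EuclideanSpace ℝ (Fin n)) :
    ⟪‖b‖ ^ (p - 2) • b - ‖a‖ ^ (p - 2) • a, b - a⟫ ≥
      (2 : ℝ) ^ (2 - p) * ‖b - a‖ ^ p := by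
  wlog hab : ‖a‖ ≤ ‖b‖ with H
  · have h := H n p hp b a (le_of_not_ge hab)
    have hswap : ⟪‖b‖ ^ (p - 2) • b - ‖a‖ ^ (p - 2) • a, b - a⟫
        = ⟪‖a‖ ^ (p - 2) • a - ‖b‖ ^ (p - 2) • b, a - b⟫ := by
      rw [show ‖b‖ ^ (p - 2) • b - ‖a‖ ^ (p - 2) • a
          = -(‖a‖ ^ (p - 2) • a - ‖b‖ ^ (p - 2) • b) by abel,
        show b - a = -(a - b) by abel, inner_neg_neg]
    rw [hswap, norm_sub_rev]
    exact h
  -- expansion of the inner product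
  have h3 : ‖b - a‖ * ‖b - a‖ = ‖b‖*‖b‖ - 2*⟪b,a⟫ + ‖a‖*‖a‖ := by
    have h := norm_sub_sq_real b a
    nlinarith [h]
  have hexp : ⟪‖b‖ ^ (p - 2) • b - ‖a‖ ^ (p - 2) • a, b - a⟫
      = (‖a‖^(p-2) + ‖b‖^(p-2))/2 * (‖b-a‖*‖b-a‖)
        + (‖b‖^(p-2) - ‖a‖^(p-2)) * (‖b‖*‖b‖ - ‖a‖*‖a‖)/2 := by
    simp only [inner_sub_left, inner_sub_right, real_inner_smul_left]
    rw [real_inner_self_eq_norm_mul_norm, real_inner_self_eq_norm_mul_norm, h3,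
      real_inner_comm b a]
    ring
  rw [ge_iff_le, hexp]
  exact aux_key hp (norm_nonneg a) hab
    (by have := norm_sub_norm_le b a; linarith)
    (by have := norm_sub_le b a; linarith)
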